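/- Let H be an n-vertex graph with at least one non-star-critical vertex, and let H' be a graph on n+1 vertices containing H as an induced subgraph. Then either H' has a non-star-critical vertex, or |S(H')| ≥ |S(H)| + 1. -/

import Mathlib

open SimpleGraph

/-- An induced star of `H` with center `v` and leaf set `L`: `L` is a nonempty
independent set of neighbors of `v`. -/
def IsStar {V : Type*} (H : SimpleGraph V) (v : V) (L : Set V) : Prop :=
  L.Nonempty ∧ (∀ u ∈ L, H.Adj v u) ∧ ∀ u ∈ L, ∀ w ∈ L, ¬ H.Adj u w

/-- `S` is the vertex set of an induced star of `H`. -/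
def IsStarSet {V : Type*} (H : SimpleGraph V) (S : Set V) : Prop :=
  ∃ v L, IsStar H v L ∧ S = insert v L

/-- `S` is the vertex set of a maximal induced star of `H`. -/
def IsMaxStarSet {V : Type*} (H : SimpleGraph V) (S : Set V) : Prop :=
  IsStarSet H S ∧ ∀ T, IsStarSet H T → S ⊆ T → S = T

/-- The set of (vertex sets of) maximal induced stars of `H`. -/
def maxStars {V : Type*} (H : SimpleGraph V) : Set (Set V) := {S | IsMaxStarSet H S}

/-- The star graph of `H`: the intersection graph of the maximal induced stars of `H`. -/
def starGraph {V : Type*} (H : SimpleGraph V) : SimpleGraph ↥(maxStars H) :=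
  SimpleGraph.fromRel fun S T => ((S : Set V) ∩ (T : Set V)).Nonempty

section Core

variable {α : Type*}

/-- `Del G x` : the graph `G` with the vertex `x` isolated (vertex-deletion kept
on the same vertex type). -/
def Del (G : SimpleGraph α) (x : α) : SimpleGraph α where
  Adj a b := G.Adj a b ∧ a ≠ x ∧ b ≠ x
  symm := by refine ⟨?_⟩; intro a b h; exact ⟨h.1.symm, h.2.2, h.2.1⟩
  loopless := by refine ⟨?_⟩; intro a h; exact G.loopless.irrefl a h.1

lemma del_adj {G : SimpleGraph α} {x a b : α} :
    (Del G x).Adj a b ↔ G.Adj a b ∧ a ≠ x ∧ b ≠ x := Iff.rfl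

lemma IsStarSet.exists_adj {G : SimpleGraph α} {S : Set α} (h : IsStarSet G S) :
    ∀ a ∈ S, ∃ b ∈ S, G.Adj a b := by
  obtain ⟨c, L, ⟨⟨l, hl⟩, hadj, _⟩, rfl⟩ := h
  intro a ha
  rcases Set.mem_insert_iff.mp ha with rfl | haL
  · exact ⟨l, Set.mem_insert_of_mem _ hl, hadj l hl⟩
  · exact ⟨c, Set.mem_insert _ _, (hadj a haL).symm⟩

lemma IsStarSet.exists_edge {G : SimpleGraph α} {S : Set α} (h : IsStarSet G S) :
    ∃ a ∈ S, ∃ b ∈ S, G.Adj a b := by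
  obtain ⟨c, L, ⟨⟨l, hl⟩, hadj, _⟩, rfl⟩ := h
  exact ⟨c, Set.mem_insert _ _, l, Set.mem_insert_of_mem _ hl, hadj l hl⟩

lemma isStarSet_del {G : SimpleGraph α} {x : α} {S : Set α} :
    IsStarSet (Del G x) S ↔ IsStarSet G S ∧ x ∉ S := by
  constructor
  · intro h
    have hx : x ∉ S := by
      intro hxS
      obtain ⟨b, _, hadj⟩ := h.exists_adj x hxS
      exact hadj.2.1 rfl
    refine ⟨?_, hx⟩
    obtain ⟨c, L, ⟨hne, hadj, hind⟩, rfl⟩ := h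
    exact ⟨c, L, ⟨hne, fun u hu => (hadj u hu).1,
      fun u hu w hw hG => hind u hu w hw ⟨hG,
        fun h' => hx (by rw [← h']; exact Set.mem_insert_of_mem _ hu),
        fun h' => hx (by rw [← h']; exact Set.mem_insert_of_mem _ hw)⟩⟩, rfl⟩
  · rintro ⟨⟨c, L, ⟨hne, hadj, hind⟩, rfl⟩, hx⟩
    refine ⟨c, L, ⟨hne, fun u hu => ⟨hadj u hu,
      fun h => hx (h ▸ Set.mem_insert _ _),
      fun h => hx (h ▸ Set.mem_insert_of_mem _ hu)⟩,
      fun u hu w hw hG => hind u hu w hw hG.1⟩, rfl⟩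

/-- removing a non-center vertex from a star set which keeps an edge gives a star set -/
lemma isStarSet_sdiff {G : SimpleGraph α} {x : α} {T : Set α} (hT : IsStarSet G T)
    {a b : α} (ha : a ∈ T \ {x}) (hb : b ∈ T \ {x}) (hab : G.Adj a b) :
    IsStarSet G (T \ {x}) := by
  obtain ⟨c, L, ⟨hne, hadj, hind⟩, rfl⟩ := hT
  by_cases hxT : x ∈ insert c L
  · rcases Set.mem_insert_iff.mp hxT with rfl | hxL
    · -- x = c : then a b ∈ L, contradicting independence
      exfalso
      have haL : a ∈ L := by
        rcases Set.mem_insert_iff.mp ha.1 with rfl | h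
        · exact absurd rfl ha.2
        · exact h
      have hbL : b ∈ L := by
        rcases Set.mem_insert_iff.mp hb.1 with rfl | h
        · exact absurd rfl hb.2
        · exact h
      exact hind a haL b hbL hab
    · -- x ∈ L
      have hcx : c ≠ x := fun h => G.loopless.irrefl x (h ▸ hadj x hxL)
      have hset : (insert c L) \ {x} = insert c (L \ {x}) := by
        ext z
        simp only [Set.mem_diff, Set.mem_insert_iff, Set.mem_singleton_iff]
        constructor
        · rintro ⟨rfl | hz, hzx⟩
          · exact Or.inl rfl
          · exact Or.inr ⟨hz, hzx⟩
        · rintro (rfl | ⟨hz, hzx⟩)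
          · exact ⟨Or.inl rfl, hcx⟩
          · exact ⟨Or.inr hz, hzx⟩
      rw [hset]
      -- L \ {x} nonempty : a or b is in it
      have hLne : (L \ {x}).Nonempty := by
        rcases Set.mem_insert_iff.mp ha.1 with rfl | haL
        · rcases Set.mem_insert_iff.mp hb.1 with rfl | hbL
          · exact absurd rfl (G.ne_of_adj hab)
          · exact ⟨b, hbL, hb.2⟩
        · exact ⟨a, haL, ha.2⟩
      exact ⟨c, L \ {x}, ⟨hLne, fun u hu => hadj u hu.1,
        fun u hu w hw => hind u hu.1 w hw.1⟩, rfl⟩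
  · rw [Set.diff_singleton_eq_self (by simpa using hxT)]
    exact ⟨c, L, ⟨hne, hadj, hind⟩, rfl⟩

variable [Finite α]

lemma exists_maxStar_ext {G : SimpleGraph α} {S : Set α} (hS : IsStarSet G S) :
    ∃ T, IsMaxStarSet G T ∧ S ⊆ T := by
  have hfin : ({T | IsStarSet G T ∧ S ⊆ T} : Set (Set α)).Finite := Set.toFinite _
  obtain ⟨T, hT, hmax⟩ := Set.Finite.exists_maximalFor id _ hfin ⟨S, hS, subset_rfl⟩
  refine ⟨T, ⟨hT.1, fun T' hT' hTT' => ?_⟩, hT.2⟩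
  exact Set.Subset.antisymm hTT' (hmax ⟨hT', hT.2.trans hTT'⟩ hTT')

/-- Key extension lemma: a maximal star of `G - x` extends to a maximal star of `G`
which adds at most the vertex `x`. -/
lemma key_ext {G : SimpleGraph α} {x : α} {W : Set α} (hW : IsMaxStarSet (Del G x) W) :
    ∃ T, IsMaxStarSet G T ∧ W ⊆ T ∧ T ⊆ insert x W := by
  obtain ⟨hWstar, hxW⟩ := isStarSet_del.mp hW.1
  obtain ⟨T, hT, hWT⟩ := exists_maxStar_ext hWstar
  refine ⟨T, hT, hWT, ?_⟩
  -- W contains an edge avoiding x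
  obtain ⟨a, haW, b, hbW, hab⟩ := hWstar.exists_edge
  have haTx : a ∈ T \ {x} := ⟨hWT haW, fun h => hxW (h ▸ haW)⟩
  have hbTx : b ∈ T \ {x} := ⟨hWT hbW, fun h => hxW (h ▸ hbW)⟩
  have hstar : IsStarSet G (T \ {x}) := isStarSet_sdiff hT.1 haTx hbTx hab
  have hstar' : IsStarSet (Del G x) (T \ {x}) :=
    isStarSet_del.mpr ⟨hstar, fun h => h.2 rfl⟩
  have hWsub : W ⊆ T \ {x} := fun z hz => ⟨hWT hz, fun h => hxW (h ▸ hz)⟩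
  have := hW.2 _ hstar' hWsub
  intro z hz
  by_cases hzx : z = x
  · exact hzx ▸ Set.mem_insert _ _
  · exact Set.mem_insert_of_mem _ (this ▸ (⟨hz, hzx⟩ : z ∈ T \ {x}))

lemma between_cases {x : α} {W T : Set α} (h1 : W ⊆ T) (h2 : T ⊆ insert x W) :
    T = W ∨ T = insert x W := by
  by_cases hx : x ∈ T
  · right
    apply Set.Subset.antisymm h2
    intro z hz
    rcases Set.mem_insert_iff.mp hz with rfl | hzW
    · exact hx
    · exact h1 hzW
  · left
    apply Set.Subset.antisymm _ h1
    intro z hz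
    rcases Set.mem_insert_iff.mp (h2 hz) with rfl | hzW
    · exact absurd hz hx
    · exact hzW

lemma ext_unique {G : SimpleGraph α} {x : α} {W T₁ T₂ : Set α} (hxW : x ∉ W)
    (h₁ : IsMaxStarSet G T₁) (h₂ : IsMaxStarSet G T₂)
    (hb₁ : W ⊆ T₁ ∧ T₁ ⊆ insert x W) (hb₂ : W ⊆ T₂ ∧ T₂ ⊆ insert x W) : T₁ = T₂ := by
  have hW : ¬ IsMaxStarSet G W ∨ True := Or.inr trivial
  rcases between_cases hb₁.1 hb₁.2 with rfl | rfl <;>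
    rcases between_cases hb₂.1 hb₂.2 with rfl | rfl
  · rfl
  · exact (h₁.2 _ h₂.1 (Set.subset_insert _ _))
  · exact (h₂.2 _ h₁.1 (Set.subset_insert _ _)).symm
  · rfl

open Classical in
/-- the unique maximal star of `G` extending a maximal star of `G - x`. -/
noncomputable def extStar (G : SimpleGraph α) (x : α) (W : Set α) : Set α :=
  if h : IsMaxStarSet (Del G x) W then Classical.choose (key_ext h) else ∅

lemma extStar_spec {G : SimpleGraph α} {x : α} {W : Set α} (h : IsMaxStarSet (Del G x) W) :
    IsMaxStarSet G (extStar G x W) ∧ W ⊆ extStar G x W ∧ extStar G x W ⊆ insert x W := by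
  rw [extStar, dif_pos h]
  exact Classical.choose_spec (key_ext h)

lemma extStar_sdiff {G : SimpleGraph α} {x : α} {W : Set α} (h : IsMaxStarSet (Del G x) W) :
    extStar G x W \ {x} = W := by
  obtain ⟨_, h1, h2⟩ := extStar_spec h
  have hxW : x ∉ W := (isStarSet_del.mp h.1).2
  apply Set.Subset.antisymm
  · intro z hz
    rcases Set.mem_insert_iff.mp (h2 hz.1) with rfl | hzW
    · exact absurd rfl hz.2
    · exact hzW
  · exact fun z hz => ⟨h1 hz, fun he => hxW (he ▸ hz)⟩

lemma extStar_injOn {G : SimpleGraph α} {x : α} :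
    Set.InjOn (extStar G x) (maxStars (Del G x)) := by
  intro W₁ h₁ W₂ h₂ he
  rw [← extStar_sdiff h₁, ← extStar_sdiff h₂, he]

lemma ncard_maxStars_del_le (G : SimpleGraph α) (x : α) :
    (maxStars (Del G x)).ncard ≤ (maxStars G).ncard := by
  rw [← Set.ncard_image_of_injOn (extStar_injOn (G := G) (x := x))]
  apply Set.ncard_le_ncard _ (Set.toFinite _)
  rintro T ⟨W, hW, rfl⟩
  exact (extStar_spec hW).1

/-- In the equality case the extension map is surjective onto `maxStars G`. -/
lemma extStar_image_eq {G : SimpleGraph α} {x : α}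
    (hle : (maxStars G).ncard ≤ (maxStars (Del G x)).ncard) :
    extStar G x '' maxStars (Del G x) = maxStars G := by
  apply Set.eq_of_subset_of_ncard_le
  · rintro T ⟨W, hW, rfl⟩
    exact (extStar_spec hW).1
  · rwa [Set.ncard_image_of_injOn (extStar_injOn (G := G) (x := x))]
  · exact Set.toFinite _

lemma sdiff_mem_maxStars_del {G : SimpleGraph α} {x : α}
    (hle : (maxStars G).ncard ≤ (maxStars (Del G x)).ncard)
    {T : Set α} (hT : T ∈ maxStars G) : T \ {x} ∈ maxStars (Del G x) := by
  obtain ⟨W, hW, rfl⟩ := (extStar_image_eq hle).symm.subset hT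
  rw [extStar_sdiff hW]
  exact hW

lemma sdiff_injOn_maxStars {G : SimpleGraph α} {x : α} :
    Set.InjOn (fun T => T \ ({x} : Set α)) (maxStars G) := by
  intro T₁ h₁ T₂ h₂ he
  simp only at he
  by_cases h1 : x ∈ T₁ <;> by_cases h2 : x ∈ T₂
  · have : T₁ = T₁ \ {x} ∪ {x} := by
      rw [Set.diff_union_self]; exact (Set.union_eq_self_of_subset_right (by simpa using h1)).symm
    rw [this, he, Set.diff_union_self,
      Set.union_eq_self_of_subset_right (by simpa using h2)]
  · rw [Set.diff_singleton_eq_self h2] at he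
    -- T₂ = T₁ \ {x} ⊆ T₁, both maximal
    have hsub : T₂ ⊆ T₁ := he ▸ Set.diff_subset
    exact (h₂.2 _ h₁.1 hsub).symm
  · rw [Set.diff_singleton_eq_self h1] at he
    have hsub : T₁ ⊆ T₂ := he ▸ Set.diff_subset
    exact h₁.2 _ h₂.1 hsub
  · rw [Set.diff_singleton_eq_self h1, Set.diff_singleton_eq_self h2] at he
    exact he

lemma extStar_of_mem {G : SimpleGraph α} {x : α}
    (hle : (maxStars G).ncard ≤ (maxStars (Del G x)).ncard)
    {T : Set α} (hT : T ∈ maxStars G) : extStar G x (T \ {x}) = T := by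
  have hW : T \ {x} ∈ maxStars (Del G x) := sdiff_mem_maxStars_del hle hT
  obtain ⟨hmax, h1, h2⟩ := extStar_spec hW
  refine ext_unique (x := x) (W := T \ {x}) (fun h => h.2 rfl) hmax hT ⟨h1, h2⟩
    ⟨Set.diff_subset, ?_⟩
  intro z hz
  by_cases hzx : z = x
  · exact hzx ▸ Set.mem_insert _ _
  · exact Set.mem_insert_of_mem _ ⟨hz, hzx⟩

omit [Finite α] in
lemma starGraph_adj {G : SimpleGraph α} {A B : ↥(maxStars G)} :
    (_root_.starGraph G).Adj A B ↔ A ≠ B ∧ ((A : Set α) ∩ (B : Set α)).Nonempty := by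
  rw [_root_.starGraph, SimpleGraph.fromRel_adj]
  constructor
  · rintro ⟨hne, h | h⟩
    · exact ⟨hne, h⟩
    · exact ⟨hne, Set.inter_comm (B : Set α) (A : Set α) ▸ h⟩
  · rintro ⟨hne, h⟩
    exact ⟨hne, Or.inl h⟩

/-- In the equality case, if the star graphs of `G` and `G - x` are isomorphic, then
no two maximal stars of `G` intersect exactly in `{x}`. -/
lemma no_bad_pair {G : SimpleGraph α} {x : α}
    (hle : (maxStars G).ncard ≤ (maxStars (Del G x)).ncard)
    (hiso : Nonempty (_root_.starGraph (Del G x) ≃g _root_.starGraph G)) :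
    ∀ T₁ ∈ maxStars G, ∀ T₂ ∈ maxStars G, T₁ ≠ T₂ → T₁ ∩ T₂ ≠ {x} := by
  rintro T₁ h₁ T₂ h₂ hne hbad
  obtain ⟨e⟩ := hiso
  set P : Type _ := {p : ↥(maxStars G) × ↥(maxStars G) // (_root_.starGraph G).Adj p.1 p.2} with hP
  set Q : Type _ := {p : ↥(maxStars (Del G x)) × ↥(maxStars (Del G x)) //
    (_root_.starGraph (Del G x)).Adj p.1 p.2} with hQ
  -- map Q → P via extStar
  have hext : ∀ W : ↥(maxStars (Del G x)), extStar G x (W : Set α) ∈ maxStars G :=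
    fun W => (extStar_spec W.2).1
  let χ : Q → P := fun q =>
    ⟨(⟨extStar G x q.1.1, hext q.1.1⟩, ⟨extStar G x q.1.2, hext q.1.2⟩), by
      obtain ⟨hne', hint⟩ := _root_.starGraph_adj.mp q.2
      refine _root_.starGraph_adj.mpr ⟨?_, ?_⟩
      · intro h
        apply hne'
        have := congrArg (Subtype.val) h
        simp only at this
        exact Subtype.ext (extStar_injOn q.1.1.2 q.1.2.2 this)
      · obtain ⟨z, hz1, hz2⟩ := hint
        exact ⟨z, (extStar_spec q.1.1.2).2.1 hz1, (extStar_spec q.1.2.2).2.1 hz2⟩⟩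
  have hχinj : Function.Injective χ := by
    intro q q' h
    have h1 := congrArg (fun p => (p.val.1 : Set α)) h
    have h2 := congrArg (fun p => (p.val.2 : Set α)) h
    simp only [χ] at h1 h2
    apply Subtype.ext
    apply Prod.ext
    · exact Subtype.ext (extStar_injOn q.1.1.2 q'.1.1.2 h1)
    · exact Subtype.ext (extStar_injOn q.1.2.2 q'.1.2.2 h2)
  -- the bad pair as an element of P
  have hadj : (_root_.starGraph G).Adj ⟨T₁, h₁⟩ ⟨T₂, h₂⟩ := by
    refine _root_.starGraph_adj.mpr ⟨fun h => hne (congrArg Subtype.val h), ?_⟩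
    rw [hbad]; exact ⟨x, rfl⟩
  let pstar : P := ⟨(⟨T₁, h₁⟩, ⟨T₂, h₂⟩), hadj⟩
  have hmiss : pstar ∉ Set.range χ := by
    rintro ⟨q, hq⟩
    obtain ⟨hne', hint⟩ := _root_.starGraph_adj.mp q.2
    have h1 := congrArg (fun p => (p.val.1 : Set α)) hq
    have h2 := congrArg (fun p => (p.val.2 : Set α)) hq
    simp only [χ, pstar] at h1 h2
    -- then q.1.1 = T₁ \ {x}, q.1.2 = T₂ \ {x}, which are disjoint
    have e1 : (q.1.1 : Set α) = T₁ \ {x} := by rw [← h1, extStar_sdiff q.1.1.2]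
    have e2 : (q.1.2 : Set α) = T₂ \ {x} := by rw [← h2, extStar_sdiff q.1.2.2]
    obtain ⟨z, hz1, hz2⟩ := hint
    rw [e1] at hz1; rw [e2] at hz2
    have : z ∈ T₁ ∩ T₂ := ⟨hz1.1, hz2.1⟩
    rw [hbad] at this
    exact hz1.2 this
  -- equiv P ≃ Q from the iso
  let ψ : P → Q := fun p =>
    ⟨(e.symm p.1.1, e.symm p.1.2), by
      have := e.symm.map_adj_iff (v := p.1.1) (w := p.1.2)
      exact this.mpr p.2⟩
  have hψinj : Function.Injective ψ := by
    intro p p' h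
    have h1 := congrArg (fun q => q.val.1) h
    have h2 := congrArg (fun q => q.val.2) h
    simp only [ψ] at h1 h2
    apply Subtype.ext
    apply Prod.ext
    · exact e.symm.injective h1
    · exact e.symm.injective h2
  have : Function.Injective (χ ∘ ψ) := hχinj.comp hψinj
  have hsurj : Function.Surjective (χ ∘ ψ) := Finite.injective_iff_surjective.mp this
  obtain ⟨p, hp⟩ := hsurj pstar
  exact hmiss ⟨ψ p, hp⟩

/-- In the equality case, with no bad pair, the natural map is a star graph isomorphism. -/
lemma natural_iso {G : SimpleGraph α} {x : α}
    (hle : (maxStars G).ncard ≤ (maxStars (Del G x)).ncard)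
    (hnobad : ∀ T₁ ∈ maxStars G, ∀ T₂ ∈ maxStars G, T₁ ≠ T₂ → T₁ ∩ T₂ ≠ {x}) :
    Nonempty (_root_.starGraph (Del G x) ≃g _root_.starGraph G) := by
  have hext : ∀ W : ↥(maxStars (Del G x)), extStar G x (W : Set α) ∈ maxStars G :=
    fun W => (extStar_spec W.2).1
  refine ⟨⟨⟨fun W => ⟨extStar G x (W : Set α), hext W⟩,
    fun T => ⟨(T : Set α) \ {x}, sdiff_mem_maxStars_del hle T.2⟩, ?_, ?_⟩, ?_⟩⟩
  · intro W
    exact Subtype.ext (extStar_sdiff W.2)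
  · intro T
    exact Subtype.ext (extStar_of_mem hle T.2)
  · intro W₁ W₂
    simp only [Equiv.coe_fn_mk]
    rw [_root_.starGraph_adj, _root_.starGraph_adj]
    constructor
    · rintro ⟨hne, z, hz1, hz2⟩
      refine ⟨fun h => hne (by rw [h]), ?_⟩
      simp only at hz1 hz2
      -- z in extStar W₁ ∩ extStar W₂; find a common vertex ≠ x
      have hne' : extStar G x (W₁ : Set α) ≠ extStar G x (W₂ : Set α) := by
        intro h
        exact hne (Subtype.ext h)
      have hbad := hnobad _ (hext W₁) _ (hext W₂) hne'
      have hsub : extStar G x (W₁ : Set α) ∩ extStar G x (W₂ : Set α) ≠ {x} := hbad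
      have hxm : ∃ z', z' ∈ extStar G x (W₁ : Set α) ∩ extStar G x (W₂ : Set α) ∧ z' ≠ x := by
        by_contra hcon
        push_neg at hcon
        apply hsub
        apply Set.Subset.antisymm
        · intro w hw
          by_contra hwx
          exact hwx (hcon w hw)
        · intro w hw
          rw [Set.mem_singleton_iff.mp hw]
          rcases em (z = x) with rfl | hzx
          · exact ⟨hz1, hz2⟩
          · exact absurd (hcon z ⟨hz1, hz2⟩) hzx
      obtain ⟨z', ⟨hz1', hz2'⟩, hzx'⟩ := hxm
      have m1 : z' ∈ (W₁ : Set α) := by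
        rw [← extStar_sdiff W₁.2]; exact ⟨hz1', hzx'⟩
      have m2 : z' ∈ (W₂ : Set α) := by
        rw [← extStar_sdiff W₂.2]; exact ⟨hz2', hzx'⟩
      exact ⟨z', m1, m2⟩
    · rintro ⟨hne, z, hz1, hz2⟩
      constructor
      · intro h
        apply hne
        exact Subtype.ext (extStar_injOn W₁.2 W₂.2 (congrArg Subtype.val h))
      · exact ⟨z, (extStar_spec W₁.2).2.1 hz1, (extStar_spec W₂.2).2.1 hz2⟩

end Core

section Bridge

variable {β α : Type*} (f : β ↪ α) (G : SimpleGraph β)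

lemma isStarSet_map {S : Set α} :
    IsStarSet (G.map f) S ↔ ∃ W, IsStarSet G W ∧ S = f '' W := by
  constructor
  · rintro ⟨c, L, ⟨⟨l, hl⟩, hadj, hind⟩, rfl⟩
    obtain ⟨c', l', hcl', hfc, hfl⟩ := (SimpleGraph.map_adj f G c l).mp (hadj l hl)
    have hLr : L ⊆ Set.range f := by
      intro u hu
      obtain ⟨a', b', _, _, hb'⟩ := (SimpleGraph.map_adj f G c u).mp (hadj u hu)
      exact ⟨b', hb'⟩
    refine ⟨insert c' (f ⁻¹' L), ⟨c', f ⁻¹' L, ⟨⟨l', by simp [Set.mem_preimage, hfl, hl]⟩,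
      ?_, ?_⟩, rfl⟩, ?_⟩
    · intro u hu
      obtain ⟨a', b', hab, ha', hb'⟩ := (SimpleGraph.map_adj f G c (f u)).mp (hadj _ hu)
      have : a' = c' := f.injective (by rw [ha', hfc])
      have hb : b' = u := f.injective hb'
      rwa [this, hb] at hab
    · intro u hu w hw hadj'
      exact hind (f u) hu (f w) hw ((SimpleGraph.map_adj f G _ _).mpr ⟨u, w, hadj', rfl, rfl⟩)
    · rw [Set.image_insert_eq, hfc, Set.image_preimage_eq_of_subset hLr]
  · rintro ⟨W, ⟨c, L, ⟨⟨l, hl⟩, hadj, hind⟩, rfl⟩, rfl⟩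
    refine ⟨f c, f '' L, ⟨⟨f l, ⟨l, hl, rfl⟩⟩, ?_, ?_⟩, by rw [Set.image_insert_eq]⟩
    · rintro u ⟨w, hw, rfl⟩
      rw [SimpleGraph.map_adj]
      exact ⟨c, w, hadj w hw, rfl, rfl⟩
    · rintro u ⟨w, hw, rfl⟩ u' ⟨w', hw', rfl⟩ hadj'
      obtain ⟨a', b', hab, ha', hb'⟩ := (SimpleGraph.map_adj f G _ _).mp hadj'
      rw [f.injective ha', f.injective hb'] at hab
      exact hind w hw w' hw' hab

lemma isMaxStarSet_map {W : Set β} :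
    IsMaxStarSet (G.map f) (f '' W) ↔ IsMaxStarSet G W := by
  constructor
  · rintro ⟨hstar, hmax⟩
    obtain ⟨W₀, hW₀, he⟩ := (isStarSet_map f G).mp hstar
    have : W = W₀ := by
      have := Set.image_injective.mpr f.injective he
      exact this
    refine ⟨this ▸ hW₀, ?_⟩
    intro T hT hWT
    have h2 : IsStarSet (G.map f) (f '' T) := (isStarSet_map f G).mpr ⟨T, hT, rfl⟩
    have h3 := hmax _ h2 (Set.image_mono hWT)
    exact Set.image_injective.mpr f.injective h3
  · rintro ⟨hstar, hmax⟩
    refine ⟨(isStarSet_map f G).mpr ⟨W, hstar, rfl⟩, ?_⟩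
    intro T hT hWT
    obtain ⟨W', hW', rfl⟩ := (isStarSet_map f G).mp hT
    have hsub : W ⊆ W' := by
      intro z hz
      obtain ⟨z', hz', he⟩ := hWT ⟨z, hz, rfl⟩
      rwa [← f.injective he]
    rw [hmax _ hW' hsub]

/-- The star graphs of `G` and `G.map f` are isomorphic. -/
noncomputable def mapStarIso : _root_.starGraph G ≃g _root_.starGraph (G.map f) := by
  have hbij : Function.Bijective (fun W : ↥(maxStars G) =>
      (⟨f '' (W : Set β), (isMaxStarSet_map f G).mpr W.2⟩ : ↥(maxStars (G.map f)))) := by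
    constructor
    · intro W₁ W₂ h
      exact Subtype.ext (Set.image_injective.mpr f.injective (congrArg Subtype.val h))
    · rintro ⟨T, hT⟩
      obtain ⟨W, hW, rfl⟩ := (isStarSet_map f G).mp hT.1
      exact ⟨⟨W, (isMaxStarSet_map f G).mp hT⟩, rfl⟩
  refine ⟨Equiv.ofBijective _ hbij, ?_⟩
  intro W₁ W₂
  rw [_root_.starGraph_adj, _root_.starGraph_adj]
  simp only [Equiv.ofBijective_apply]
  constructor
  · rintro ⟨hne, z, hz1, hz2⟩
    refine ⟨fun h => hne (by rw [h]), ?_⟩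
    obtain ⟨w, hw, rfl⟩ := hz1
    obtain ⟨w', hw', he⟩ := hz2
    exact ⟨w, hw, f.injective he ▸ hw'⟩
  · rintro ⟨hne, z, hz1, hz2⟩
    refine ⟨?_, ⟨f z, ⟨z, hz1, rfl⟩, ⟨z, hz2, rfl⟩⟩⟩
    intro h
    apply hne
    exact Subtype.ext (Set.image_injective.mpr f.injective (congrArg Subtype.val h))

lemma maxStars_map_ncard_eq : (maxStars (G.map f)).ncard = (maxStars G).ncard := by
  rw [← Nat.card_coe_set_eq, ← Nat.card_coe_set_eq]
  exact Nat.card_congr (mapStarIso f G).toEquiv.symm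

end Bridge

section Glue

variable {α : Type*}

lemma induce_map_eq (H : SimpleGraph α) (x : α) :
    (H.induce ({x}ᶜ : Set α)).map (Function.Embedding.subtype _) = Del H x := by
  ext a b
  rw [SimpleGraph.map_adj, del_adj]
  constructor
  · rintro ⟨a', b', hab, rfl, rfl⟩
    exact ⟨hab, a'.2, b'.2⟩
  · rintro ⟨hab, ha, hb⟩
    exact ⟨⟨a, ha⟩, ⟨b, hb⟩, hab, rfl, rfl⟩

lemma del_map_comm {β : Type*} (f : β ↪ α) (G : SimpleGraph β) (x : β) :
    (Del G x).map f = Del (G.map f) (f x) := by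
  ext a b
  rw [SimpleGraph.map_adj, del_adj, SimpleGraph.map_adj]
  constructor
  · rintro ⟨a', b', ⟨hab, ha, hb⟩, rfl, rfl⟩
    exact ⟨⟨a', b', hab, rfl, rfl⟩, fun h => ha (f.injective h), fun h => hb (f.injective h)⟩
  · rintro ⟨⟨a', b', hab, rfl, rfl⟩, ha, hb⟩
    exact ⟨a', b', ⟨hab, fun h => ha (congrArg f h), fun h => hb (congrArg f h)⟩, rfl, rfl⟩

lemma del_del_comm (H : SimpleGraph α) (x z : α) :
    Del (Del H x) z = Del (Del H z) x := by
  ext a b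
  simp only [del_adj]
  tauto

end Glue

/-- Monotonicity: if `H = H' - y` has a non-star-critical vertex, then either `H'`
has a non-star-critical vertex, or `H'` has strictly more maximal stars than `H`. -/
theorem stmt12 {V' : Type*} [Fintype V'] (H' : SimpleGraph V') (y : V')
    (hnc : ∃ v : ({y}ᶜ : Set V'),
      Nonempty (_root_.starGraph ((H'.induce ({y}ᶜ : Set V')).induce ({v}ᶜ : Set ({y}ᶜ : Set V')))
        ≃g _root_.starGraph (H'.induce ({y}ᶜ : Set V')))) :
    (∃ w : V', Nonempty (_root_.starGraph (H'.induce ({w}ᶜ : Set V')) ≃g _root_.starGraph H')) ∨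
      (maxStars (H'.induce ({y}ᶜ : Set V'))).ncard + 1 ≤ (maxStars H').ncard := by
  classical
  set Γ := H'.induce ({y}ᶜ : Set V') with hΓ
  set Hy := Del H' y with hHy
  have hmapy : Γ.map (Function.Embedding.subtype _) = Hy := induce_map_eq H' y
  have ey : _root_.starGraph Γ ≃g _root_.starGraph Hy := by
    rw [← hmapy]; exact mapStarIso _ Γ
  have hcardy : (maxStars Γ).ncard = (maxStars Hy).ncard := by
    rw [← hmapy, maxStars_map_ncard_eq]
  by_cases hgrow : (maxStars Hy).ncard + 1 ≤ (maxStars H').ncard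
  · right
    rw [hcardy]
    exact hgrow
  left
  have hle : (maxStars H').ncard ≤ (maxStars Hy).ncard := by
    by_contra h
    push_neg at h
    exact hgrow h
  obtain ⟨v, ⟨g₀⟩⟩ := hnc
  set v' : V' := (v : V') with hv'
  have hvy : v' ≠ y := v.2
  -- bridge the double induce
  have hmapv : ((Γ.induce ({v}ᶜ : Set ({y}ᶜ : Set V'))).map (Function.Embedding.subtype _))
      = Del Γ v := induce_map_eq Γ v
  have e1 : _root_.starGraph (Γ.induce ({v}ᶜ : Set ({y}ᶜ : Set V'))) ≃g _root_.starGraph (Del Γ v) := by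
    rw [← hmapv]; exact mapStarIso _ _
  have hmap2 : (Del Γ v).map (Function.Embedding.subtype _) = Del Hy v' := by
    rw [del_map_comm, hmapy]
    rfl
  have e2 : _root_.starGraph (Del Γ v) ≃g _root_.starGraph (Del Hy v') := by
    rw [← hmap2]; exact mapStarIso _ _
  have g : _root_.starGraph (Del Hy v') ≃g _root_.starGraph Hy :=
    (e2.symm.trans e1.symm).trans (g₀.trans ey)
  have hcntv : (maxStars (Del Hy v')).ncard = (maxStars Hy).ncard := by
    rw [← Nat.card_coe_set_eq, ← Nat.card_coe_set_eq]
    exact Nat.card_congr g.toEquiv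
  -- no bad pair for (Hy, v')
  have hnb := no_bad_pair (G := Hy) (x := v') hcntv.ge ⟨g⟩
  -- equality case for (H', v')
  have hle3 : (maxStars H').ncard ≤ (maxStars (Del H' v')).ncard := by
    calc (maxStars H').ncard ≤ (maxStars Hy).ncard := hle
      _ = (maxStars (Del Hy v')).ncard := hcntv.symm
      _ = (maxStars (Del (Del H' v') y)).ncard := by rw [del_del_comm]
      _ ≤ (maxStars (Del H' v')).ncard := ncard_maxStars_del_le _ _
  -- no bad pair for (H', v')
  have hnbH' : ∀ T₁ ∈ maxStars H', ∀ T₂ ∈ maxStars H', T₁ ≠ T₂ → T₁ ∩ T₂ ≠ {v'} := by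
    rintro T₁ h₁ T₂ h₂ hne hbad
    have hW₁ : T₁ \ {y} ∈ maxStars Hy := sdiff_mem_maxStars_del hle h₁
    have hW₂ : T₂ \ {y} ∈ maxStars Hy := sdiff_mem_maxStars_del hle h₂
    have hWne : T₁ \ {y} ≠ T₂ \ {y} := fun h => hne (sdiff_injOn_maxStars h₁ h₂ h)
    apply hnb _ hW₁ _ hW₂ hWne
    ext z
    simp only [Set.mem_inter_iff, Set.mem_diff, Set.mem_singleton_iff]
    constructor
    · rintro ⟨⟨hz1, -⟩, hz2, -⟩
      have hz : z ∈ T₁ ∩ T₂ := ⟨hz1, hz2⟩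
      rw [hbad] at hz
      exact hz
    · rintro rfl
      have hz : v' ∈ T₁ ∩ T₂ := by rw [hbad]; rfl
      exact ⟨⟨hz.1, hvy⟩, hz.2, hvy⟩
  obtain ⟨μ⟩ := natural_iso hle3 hnbH'
  have hmapv' : ((H'.induce ({v'}ᶜ : Set V')).map (Function.Embedding.subtype _))
      = Del H' v' := induce_map_eq H' v'
  have ev' : _root_.starGraph (H'.induce ({v'}ᶜ : Set V')) ≃g _root_.starGraph (Del H' v') := by
    rw [← hmapv']; exact mapStarIso _ _
  exact ⟨v', ⟨ev'.trans μ⟩⟩
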